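/- Let P^* : B → C be a functor left adjoint to P_* : C → B, with unit η : Id_B → P_* P^*, and let T = T(P^*,P_*) be the induced comonad on C. If B is idempotent complete and η admits a left inverse natural transformation (i.e. there is a natural transformation λ : P_* P^* → Id_B with λ ∘ η = id), then the comparison functor Φ : B → C_T is an equivalence of categories. -/

import Mathlib

open CategoryTheory CategoryTheory.Limits

universe v₁ v₂ u₁ u₂

/-- Auxiliary splitting construction: given a coalgebra structure map `a` (written with
explicit composite `Pstar.obj (Psub.obj A)`), we can split the induced idempotent on
`Psub.obj A` and obtain an object `Y` together with an isomorphism `A ≅ Pstar.obj Y`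
compatible with the coalgebra structures. -/
theorem comonadComparison_aux
    {B : Type u₁} {C : Type u₂} [Category.{v₁} B] [Category.{v₂} C]
    (Pstar : B ⥤ C) (Psub : C ⥤ B) (adj : Pstar ⊣ Psub)
    [IsIdempotentComplete B]
    (lam : Pstar ⋙ Psub ⟶ 𝟭 B) (hlam' : ∀ X : B, adj.unit.app X ≫ lam.app X = 𝟙 X)
    (A : C) (a : A ⟶ Pstar.obj (Psub.obj A))
    (hcu : a ≫ adj.counit.app A = 𝟙 A)
    (hco : a ≫ Pstar.map (adj.unit.app (Psub.obj A)) = a ≫ Pstar.map (Psub.map a)) :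
    ∃ (Y : B) (u : A ⟶ Pstar.obj Y) (v : Pstar.obj Y ⟶ A),
      u ≫ v = 𝟙 A ∧ v ≫ u = 𝟙 (Pstar.obj Y) ∧
      a ≫ Pstar.map (Psub.map u) = u ≫ Pstar.map (adj.unit.app Y) := by
  have hnat : ∀ {U V : B} (f : U ⟶ V),
      Psub.map (Pstar.map f) ≫ lam.app V = lam.app U ≫ f := by
    intro U V f
    simpa using lam.naturality f
  set p : Psub.obj A ⟶ Psub.obj A := Psub.map a ≫ lam.app (Psub.obj A) with hpdef
  have hstep : p ≫ Psub.map a = p ≫ adj.unit.app (Psub.obj A) := by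
    calc p ≫ Psub.map a
        = Psub.map a ≫ (lam.app (Psub.obj A) ≫ Psub.map a) := by
          rw [hpdef]; simp only [Category.assoc]
      _ = Psub.map a ≫ Psub.map (Pstar.map (Psub.map a))
            ≫ lam.app (Psub.obj (Pstar.obj (Psub.obj A))) := by
          rw [hnat]
      _ = Psub.map (a ≫ Pstar.map (Psub.map a))
            ≫ lam.app (Psub.obj (Pstar.obj (Psub.obj A))) := by
          rw [Psub.map_comp]; simp only [Category.assoc]
      _ = Psub.map (a ≫ Pstar.map (adj.unit.app (Psub.obj A)))
            ≫ lam.app (Psub.obj (Pstar.obj (Psub.obj A))) := by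
          rw [hco]
      _ = Psub.map a ≫ Psub.map (Pstar.map (adj.unit.app (Psub.obj A)))
            ≫ lam.app (Psub.obj (Pstar.obj (Psub.obj A))) := by
          rw [Psub.map_comp]; simp only [Category.assoc]
      _ = Psub.map a ≫ lam.app (Psub.obj A) ≫ adj.unit.app (Psub.obj A) := by
          rw [show Psub.map (Pstar.map (adj.unit.app (Psub.obj A)))
                ≫ lam.app (Psub.obj (Pstar.obj (Psub.obj A)))
              = lam.app (Psub.obj A) ≫ adj.unit.app (Psub.obj A)
            from hnat (adj.unit.app (Psub.obj A))]
      _ = p ≫ adj.unit.app (Psub.obj A) := by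
          rw [hpdef]; simp only [Category.assoc]
  have hp : p ≫ p = p := by
    calc p ≫ p = (p ≫ Psub.map a) ≫ lam.app (Psub.obj A) := by
          rw [hpdef]; simp only [Category.assoc]
      _ = (p ≫ adj.unit.app (Psub.obj A)) ≫ lam.app (Psub.obj A) := by rw [hstep]
      _ = p := by rw [Category.assoc, hlam', Category.comp_id]
  obtain ⟨Y, i, e, h1, h2⟩ := IsIdempotentComplete.idempotents_split (Psub.obj A) p hp
  have hip : i ≫ p = i := by rw [← h2, ← Category.assoc, h1, Category.id_comp]
  have key2 : i ≫ Psub.map a = i ≫ adj.unit.app (Psub.obj A) := by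
    calc i ≫ Psub.map a = i ≫ p ≫ Psub.map a := by rw [← Category.assoc, hip]
      _ = i ≫ p ≫ adj.unit.app (Psub.obj A) := by rw [hstep]
      _ = i ≫ adj.unit.app (Psub.obj A) := by rw [← Category.assoc, hip]
  have hne : e ≫ adj.unit.app Y
      = adj.unit.app (Psub.obj A) ≫ Psub.map (Pstar.map e) := by
    simpa using adj.unit.naturality e
  have key3 : i ≫ Psub.map a ≫ Psub.map (Pstar.map e) = adj.unit.app Y := by
    rw [← Category.assoc, key2, Category.assoc, ← hne, ← Category.assoc, h1,
      Category.id_comp]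
  refine ⟨Y, a ≫ Pstar.map e, Pstar.map i ≫ adj.counit.app A, ?_, ?_, ?_⟩
  · calc (a ≫ Pstar.map e) ≫ Pstar.map i ≫ adj.counit.app A
        = a ≫ Pstar.map (e ≫ i) ≫ adj.counit.app A := by
          rw [Pstar.map_comp]; simp only [Category.assoc]
      _ = a ≫ Pstar.map (Psub.map a) ≫ Pstar.map (lam.app (Psub.obj A))
            ≫ adj.counit.app A := by
          rw [h2, hpdef, Pstar.map_comp]; simp only [Category.assoc]
      _ = (a ≫ Pstar.map (adj.unit.app (Psub.obj A)))
            ≫ Pstar.map (lam.app (Psub.obj A)) ≫ adj.counit.app A := by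
          rw [← Category.assoc, ← hco]
      _ = a ≫ Pstar.map (adj.unit.app (Psub.obj A) ≫ lam.app (Psub.obj A))
            ≫ adj.counit.app A := by
          rw [Pstar.map_comp]; simp only [Category.assoc]
      _ = 𝟙 A := by
          rw [hlam', Pstar.map_id]
          simpa using hcu
  · have hca : adj.counit.app A ≫ a
        = Pstar.map (Psub.map a) ≫ adj.counit.app (Pstar.obj (Psub.obj A)) := by
      simpa using (adj.counit.naturality a).symm
    have hce : adj.counit.app (Pstar.obj (Psub.obj A)) ≫ Pstar.map e
        = Pstar.map (Psub.map (Pstar.map e)) ≫ adj.counit.app (Pstar.obj Y) := by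
      simpa using (adj.counit.naturality (Pstar.map e)).symm
    calc (Pstar.map i ≫ adj.counit.app A) ≫ a ≫ Pstar.map e
        = Pstar.map i ≫ (adj.counit.app A ≫ a) ≫ Pstar.map e := by
          simp only [Category.assoc]
      _ = Pstar.map i ≫ Pstar.map (Psub.map a)
            ≫ adj.counit.app (Pstar.obj (Psub.obj A)) ≫ Pstar.map e := by
          rw [hca]; simp only [Category.assoc]
      _ = Pstar.map i ≫ Pstar.map (Psub.map a)
            ≫ Pstar.map (Psub.map (Pstar.map e)) ≫ adj.counit.app (Pstar.obj Y) := by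
          rw [hce]
      _ = Pstar.map (i ≫ Psub.map a ≫ Psub.map (Pstar.map e))
            ≫ adj.counit.app (Pstar.obj Y) := by
          simp only [Pstar.map_comp, Category.assoc]
      _ = Pstar.map (adj.unit.app Y) ≫ adj.counit.app (Pstar.obj Y) := by rw [key3]
      _ = 𝟙 (Pstar.obj Y) := adj.left_triangle_components Y
  · calc a ≫ Pstar.map (Psub.map (a ≫ Pstar.map e))
        = (a ≫ Pstar.map (Psub.map a)) ≫ Pstar.map (Psub.map (Pstar.map e)) := by
          rw [Psub.map_comp, Pstar.map_comp]; simp only [Category.assoc]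
      _ = a ≫ Pstar.map (adj.unit.app (Psub.obj A) ≫ Psub.map (Pstar.map e)) := by
          rw [← hco, Pstar.map_comp]; simp only [Category.assoc]
      _ = a ≫ Pstar.map (e ≫ adj.unit.app Y) := by rw [← hne]
      _ = (a ≫ Pstar.map e) ≫ Pstar.map (adj.unit.app Y) := by
          rw [Pstar.map_comp]; simp only [Category.assoc]

/-- **Statement 8.** If `P^* ⊣ P_*`, `B` is idempotent complete and the unit
`η : 𝟭 B ⟶ P^* ⋙ P_*` admits a left inverse natural transformation, then the comparison
functor `B ⥤ C_{T(P^*, P_*)}` to the Eilenberg–Moore category of comodules over the induced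
comonad is an equivalence. -/
theorem comonadComparison_isEquivalence_of_split_unit
    {B : Type u₁} {C : Type u₂} [Category.{v₁} B] [Category.{v₂} C]
    (Pstar : B ⥤ C) (Psub : C ⥤ B) (adj : Pstar ⊣ Psub)
    [IsIdempotentComplete B]
    (lam : Pstar ⋙ Psub ⟶ 𝟭 B) (hlam : adj.unit ≫ lam = 𝟙 (𝟭 B)) :
    (Comonad.comparison adj).IsEquivalence := by
  have hlam' : ∀ X : B, adj.unit.app X ≫ lam.app X = 𝟙 X := by
    intro X
    have := NatTrans.congr_app hlam X
    simpa using this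
  have hrec : ∀ {X Y : B} (k : X ⟶ Y),
      adj.unit.app X ≫ Psub.map (Pstar.map k) ≫ lam.app Y = k := by
    intro X Y k
    have hu : k ≫ adj.unit.app Y = adj.unit.app X ≫ Psub.map (Pstar.map k) := by
      simpa using adj.unit.naturality k
    rw [← Category.assoc, ← hu, Category.assoc, hlam', Category.comp_id]
  have faithful : (Comonad.comparison adj).Faithful := by
    constructor
    intro X Y f g h
    have h' : Pstar.map f = Pstar.map g := congrArg Comonad.Coalgebra.Hom.f h
    rw [← hrec f, h', hrec g]
  have full : (Comonad.comparison adj).Full := by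
    constructor
    intro X Y g
    refine ⟨adj.unit.app X ≫ Psub.map g.f ≫ lam.app Y, ?_⟩
    have hg : Pstar.map (adj.unit.app X) ≫ Pstar.map (Psub.map g.f)
        = g.f ≫ Pstar.map (adj.unit.app Y) := by
      exact g.h
    apply Comonad.Coalgebra.Hom.ext
    show Pstar.map (adj.unit.app X ≫ Psub.map g.f ≫ lam.app Y) = g.f
    erw [Pstar.map_comp, Pstar.map_comp, ← Category.assoc, hg, Category.assoc,
      ← Pstar.map_comp, hlam']
    simp
    exact Category.comp_id _
  have essSurj : (Comonad.comparison adj).EssSurj := by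
    constructor
    intro Xalg
    obtain ⟨Y, u, v, uv, vu, w⟩ :=
      comonadComparison_aux Pstar Psub adj lam hlam' Xalg.A Xalg.a
        Xalg.counit Xalg.coassoc
    exact ⟨Y, ⟨(Comonad.Coalgebra.isoMk (A := Xalg)
      (B := (Comonad.comparison adj).obj Y)
      (⟨u, v, uv, vu⟩ : Xalg.A ≅ Pstar.obj Y) w).symm⟩⟩
  exact { faithful := faithful, full := full, essSurj := essSurj }
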